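/- Let H be a graph with vertex partition V(H) = U ∪ V, where every vertex of H[V] has at least 0.9·|V| neighbours in V and |U| ≤ 0.1·|V|, and U is covered by an absorbable system of vertex-disjoint paths of length at most 2 attached to distinct vertices of V. Then for any two distinct vertices x, y ∈ V(H) and any ℓ with 6 ≤ ℓ ≤ 2v(H)/3, H contains an xy-path of length ℓ. -/
import Mathlib

open Finset SimpleGraph Walk

namespace Stmt14Aux

variable {α : Type*} [DecidableEq α] {G : SimpleGraph α}

omit [DecidableEq α] in
lemma support_head {u v : α} (p : G.Walk u v) : p.support = u :: p.support.tail := by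
  cases p <;> simp

omit [DecidableEq α] in
lemma append_isPath {u v w : α} {p : G.Walk u v} {q : G.Walk v w}
    (hp : p.IsPath) (hq : q.IsPath)
    (h : ∀ z ∈ p.support, z ∈ q.support → z = v) : (p.append q).IsPath := by
  rw [SimpleGraph.Walk.isPath_def, SimpleGraph.Walk.support_append]
  have hqs := support_head q
  rw [SimpleGraph.Walk.isPath_def] at hp hq
  rw [hqs, List.nodup_cons] at hq
  refine List.Nodup.append hp hq.2 ?_
  intro z hz1 hz2
  have hz2' : z ∈ q.support := by rw [hqs]; exact List.mem_cons_of_mem _ hz2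
  have hzv := h z hz1 hz2'
  subst hzv
  exact hq.1 hz2

/-- Greedy construction of a path of prescribed length inside `V` avoiding `S`. -/
lemma mid_path (G : SimpleGraph α) [DecidableRel G.Adj] (V : Finset α) (D : ℕ)
    (hD : ∀ v ∈ V, D ≤ (V.filter (G.Adj v)).card) :
    ∀ k : ℕ, ∀ (S : Finset α) (u v : α), u ∈ V → v ∈ V → u ≠ v → u ∉ S → v ∉ S → 2 ≤ k →
    k + S.card + V.card + 1 ≤ 2 * D →
    ∃ q : G.Walk u v, q.IsPath ∧ q.length = k ∧ ∀ w ∈ q.support, w ∈ V ∧ w ∉ S := by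
  intro k
  induction k with
  | zero => intro S u v _ _ _ _ _ h2 _; omega
  | succ n ih =>
    intro S u v hu hv huv huS hvS h2 hcount
    have hDp : D ≤ V.card := (hD u hu).trans (card_le_card (filter_subset _ _))
    have hins : (insert u (insert v S)).card ≤ S.card + 2 :=
      (Finset.card_insert_le _ _).trans (by have := Finset.card_insert_le v S; omega)
    rcases Nat.lt_or_ge n 2 with hn | hn
    · -- base case : n + 1 = 2
      have hn1 : n = 1 := by omega
      subst hn1
      have hcard : V.card + ((V.filter (G.Adj u)) ∩ (V.filter (G.Adj v))).card
          ≥ (V.filter (G.Adj u)).card + (V.filter (G.Adj v)).card := by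
        have h1 := Finset.card_union_add_card_inter (V.filter (G.Adj u)) (V.filter (G.Adj v))
        have h2 : ((V.filter (G.Adj u)) ∪ (V.filter (G.Adj v))).card ≤ V.card := by
          apply card_le_card
          intro z hz
          rcases Finset.mem_union.1 hz with hz | hz
          · exact (mem_filter.1 hz).1
          · exact (mem_filter.1 hz).1
        omega
      have hTcard :
          1 ≤ (((V.filter (G.Adj u)) ∩ (V.filter (G.Adj v))) \ (insert u (insert v S))).card := by
        have h3 := Finset.card_le_card_sdiff_add_card
          (s := (V.filter (G.Adj u)) ∩ (V.filter (G.Adj v))) (t := insert u (insert v S))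
        have h4 := hD u hu
        have h5 := hD v hv
        omega
      obtain ⟨w₀, hw₀⟩ := Finset.card_pos.mp hTcard
      rw [Finset.mem_sdiff] at hw₀
      obtain ⟨hw₀AB, hw₀n⟩ := hw₀
      rw [Finset.mem_inter] at hw₀AB
      have hw₀V : w₀ ∈ V := (mem_filter.1 hw₀AB.1).1
      have hadjuw : G.Adj u w₀ := (mem_filter.1 hw₀AB.1).2
      have hadjvw : G.Adj v w₀ := (mem_filter.1 hw₀AB.2).2
      have hw₀u : w₀ ≠ u := fun h => hw₀n (by simp [h])
      have hw₀v : w₀ ≠ v := fun h => hw₀n (by simp [h])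
      have hw₀S : w₀ ∉ S := fun h => hw₀n (by simp [h])
      refine ⟨Walk.cons hadjuw (Walk.cons hadjvw.symm Walk.nil), ?_, by simp, ?_⟩
      · simp [Walk.cons_isPath_iff, hw₀v, huv, Ne.symm hw₀u]
      · intro z hz
        simp only [Walk.support_cons, Walk.support_nil, List.mem_cons,
          List.mem_singleton] at hz
        rcases hz with rfl | rfl | rfl | h
        · exact ⟨hu, huS⟩
        · exact ⟨hw₀V, hw₀S⟩
        · exact ⟨hv, hvS⟩
        · simp at h
    · -- step case
      have hTcard : 1 ≤ ((V.filter (G.Adj u)) \ (insert u (insert v S))).card := by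
        have h3 := Finset.card_le_card_sdiff_add_card
          (s := V.filter (G.Adj u)) (t := insert u (insert v S))
        have h4 := hD u hu
        omega
      obtain ⟨w₀, hw₀⟩ := Finset.card_pos.mp hTcard
      rw [Finset.mem_sdiff] at hw₀
      obtain ⟨hw₀A, hw₀n⟩ := hw₀
      have hw₀V : w₀ ∈ V := (mem_filter.1 hw₀A).1
      have hadjuw : G.Adj u w₀ := (mem_filter.1 hw₀A).2
      have hw₀u : w₀ ≠ u := fun h => hw₀n (by simp [h])
      have hw₀v : w₀ ≠ v := fun h => hw₀n (by simp [h])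
      have hw₀S : w₀ ∉ S := fun h => hw₀n (by simp [h])
      have hvS' : v ∉ insert u S := by
        simp only [Finset.mem_insert]; push_neg; exact ⟨Ne.symm huv, hvS⟩
      have hw₀S' : w₀ ∉ insert u S := by
        simp only [Finset.mem_insert]; push_neg; exact ⟨hw₀u, hw₀S⟩
      have hcount' : n + (insert u S).card + V.card + 1 ≤ 2 * D := by
        have := Finset.card_insert_le u S; omega
      obtain ⟨q', hq'path, hq'len, hq'supp⟩ :=
        ih (insert u S) w₀ v hw₀V hv hw₀v hw₀S' hvS' hn hcount'
      have huq' : u ∉ q'.support := fun h => (hq'supp u h).2 (Finset.mem_insert_self _ _)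
      refine ⟨Walk.cons hadjuw q', hq'path.cons huq', by simp [hq'len], ?_⟩
      intro z hz
      rw [Walk.support_cons, List.mem_cons] at hz
      rcases hz with rfl | hz
      · exact ⟨hu, huS⟩
      · obtain ⟨h1, h2⟩ := hq'supp z hz
        exact ⟨h1, fun h => h2 (Finset.mem_insert_of_mem h)⟩

omit [DecidableEq α] in
lemma glue3 {x₀ y₀ u v : α} (tx : G.Walk x₀ u) (ty : G.Walk y₀ v) (mid : G.Walk u v)
    (htx : tx.IsPath) (hty : ty.IsPath) (hm : mid.IsPath)
    (hdisjt : ∀ z ∈ tx.support, z ∉ ty.support)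
    (htxm : ∀ z ∈ tx.support, z ∈ mid.support → z = u)
    (htym : ∀ z ∈ ty.support, z ∈ mid.support → z = v) :
    ∃ q : G.Walk x₀ y₀, q.IsPath ∧ q.length = tx.length + mid.length + ty.length := by
  refine ⟨tx.append (mid.append ty.reverse), ?_, by
    rw [Walk.length_append, Walk.length_append, Walk.length_reverse]; ring⟩
  refine append_isPath htx (append_isPath hm hty.reverse ?_) ?_
  · intro z hz1 hz2
    rw [Walk.support_reverse, List.mem_reverse] at hz2
    exact htym z hz2 hz1
  · intro z hz1 hz2
    rw [Walk.mem_support_append_iff] at hz2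
    rcases hz2 with hz2 | hz2
    · exact htxm z hz1 hz2
    · rw [Walk.support_reverse, List.mem_reverse] at hz2
      exact absurd hz2 (hdisjt z hz1)

lemma tail_walk_a {xi yi ai : α} (w : G.Walk xi yi) (hw : w.IsPath) (z : α) (hz : z ∈ w.support)
    (ha : G.Adj ai xi) (hai : ai ∉ w.support) :
    ∃ q : G.Walk z ai, q.IsPath ∧ q.length = (w.takeUntil z hz).length + 1 ∧
      ∀ t ∈ q.support, t = ai ∨ t ∈ w.support := by
  refine ⟨((w.takeUntil z hz).reverse).append (Walk.cons ha.symm Walk.nil), ?_, ?_, ?_⟩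
  · refine append_isPath (hw.takeUntil hz).reverse (by
      simp only [Walk.cons_isPath_iff, Walk.IsPath.nil, Walk.support_nil,
        List.mem_singleton, true_and]
      exact fun h => hai (h ▸ Walk.start_mem_support w)) ?_
    intro t ht1 ht2
    simp only [Walk.support_cons, Walk.support_nil, List.mem_cons, List.mem_singleton] at ht2
    rcases ht2 with rfl | rfl | h
    · rfl
    · exfalso
      rw [Walk.support_reverse, List.mem_reverse] at ht1
      exact hai (Walk.support_takeUntil_subset w hz ht1)
    · simp at h
  · rw [Walk.length_append, Walk.length_reverse]; simp
  · intro t ht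
    rw [Walk.mem_support_append_iff] at ht
    rcases ht with ht | ht
    · rw [Walk.support_reverse, List.mem_reverse] at ht
      exact Or.inr (Walk.support_takeUntil_subset w hz ht)
    · simp only [Walk.support_cons, Walk.support_nil, List.mem_cons, List.mem_singleton] at ht
      rcases ht with rfl | rfl | h
      · exact Or.inr (Walk.start_mem_support w)
      · exact Or.inl rfl
      · simp at h

lemma tail_walk_b {xi yi bi : α} (w : G.Walk xi yi) (hw : w.IsPath) (z : α) (hz : z ∈ w.support)
    (hb : G.Adj bi yi) (hbi : bi ∉ w.support) :
    ∃ q : G.Walk z bi, q.IsPath ∧ q.length = (w.dropUntil z hz).length + 1 ∧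
      ∀ t ∈ q.support, t = bi ∨ t ∈ w.support := by
  refine ⟨(w.dropUntil z hz).append (Walk.cons hb.symm Walk.nil), ?_, ?_, ?_⟩
  · refine append_isPath (hw.dropUntil hz) (by
      simp only [Walk.cons_isPath_iff, Walk.IsPath.nil, Walk.support_nil,
        List.mem_singleton, true_and]
      exact fun h => hbi (h ▸ Walk.end_mem_support w)) ?_
    intro t ht1 ht2
    simp only [Walk.support_cons, Walk.support_nil, List.mem_cons, List.mem_singleton] at ht2
    rcases ht2 with rfl | rfl | h
    · rfl
    · exact absurd (Walk.support_dropUntil_subset w hz ht1) hbi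
    · simp at h
  · rw [Walk.length_append]; simp
  · intro t ht
    rw [Walk.mem_support_append_iff] at ht
    rcases ht with ht | ht
    · exact Or.inr (Walk.support_dropUntil_subset w hz ht)
    · simp only [Walk.support_cons, Walk.support_nil, List.mem_cons, List.mem_singleton] at ht
      rcases ht with rfl | rfl | h
      · exact Or.inr (Walk.end_mem_support w)
      · exact Or.inl rfl
      · simp at h


end Stmt14Aux

namespace Stmt14AuxB
variable {α : Type*} {G : SimpleGraph α}

lemma two_tails {xi yi : α} (ai bi x₀ y₀ : α) (w : G.Walk xi yi)
    (hw : w.IsPath) (hlen : w.length ≤ 2)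
    (hx : x₀ ∈ w.support) (hy : y₀ ∈ w.support) (hne : x₀ ≠ y₀)
    (ha : G.Adj ai xi) (hb : G.Adj bi yi)
    (hai : ai ∉ w.support) (hbi : bi ∉ w.support) (hab : ai ≠ bi) :
    ∃ (cx cy : α) (qx : G.Walk x₀ cx) (qy : G.Walk y₀ cy),
      (cx = ai ∨ cx = bi) ∧ (cy = ai ∨ cy = bi) ∧ cx ≠ cy ∧ qx.IsPath ∧ qy.IsPath ∧
      1 ≤ qx.length ∧ qx.length ≤ 2 ∧ 1 ≤ qy.length ∧ qy.length ≤ 2 ∧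
      (∀ z ∈ qx.support, z = cx ∨ z ∈ w.support) ∧
      (∀ z ∈ qy.support, z = cy ∨ z ∈ w.support) ∧
      (∀ z ∈ qx.support, z ∉ qy.support) := by
  cases w with
  | nil =>
    simp only [Walk.support_nil, List.mem_singleton] at hx hy
    exact absurd (hx.trans hy.symm) hne
  | @cons _ v _ h q =>
    cases q with
    | nil =>
      -- w = xi — yi
      simp only [Walk.support_cons, Walk.support_nil, List.mem_cons, List.mem_singleton, List.not_mem_nil, or_false] at hx hy hai hbi
      push_neg at hai hbi
      have hxiyi : xi ≠ yi := h.ne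
      rcases hx with rfl | rfl <;> rcases hy with rfl | rfl
      · exact absurd rfl hne
      · -- x₀ = xi, y₀ = yi
        refine ⟨ai, bi, Walk.cons ha.symm Walk.nil, Walk.cons hb.symm Walk.nil,
          Or.inl rfl, Or.inr rfl, hab, ?_, ?_, ?_, ?_, ?_, ?_, ?_, ?_, ?_⟩ <;>
          simp_all <;> tauto
      · -- x₀ = yi, y₀ = xi
        refine ⟨bi, ai, Walk.cons hb.symm Walk.nil, Walk.cons ha.symm Walk.nil,
          Or.inr rfl, Or.inl rfl, hab.symm, ?_, ?_, ?_, ?_, ?_, ?_, ?_, ?_, ?_⟩ <;>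
          simp_all <;> tauto
      · exact absurd rfl hne
    | @cons _ v' _ h' q' =>
      cases q' with
      | nil =>
        -- w = xi — v — yi
        simp only [Walk.support_cons, Walk.support_nil, List.mem_cons, List.mem_singleton,
          List.not_mem_nil, or_false]
          at hx hy hai hbi
        push_neg at hai hbi
        have hnodup := hw.support_nodup
        simp only [Walk.support_cons, Walk.support_nil, List.nodup_cons, List.mem_cons,
          List.mem_singleton, List.not_mem_nil, or_false, List.nodup_nil, and_true,
          not_or] at hnodup
        obtain ⟨⟨hxv, hxy'⟩, hvy⟩ := hnodup
        rcases hx with rfl | rfl | rfl <;> rcases hy with rfl | rfl | rfl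
        · exact absurd rfl hne
        · -- (xi, v)
          refine ⟨ai, bi, Walk.cons ha.symm Walk.nil, Walk.cons h' (Walk.cons hb.symm Walk.nil),
            Or.inl rfl, Or.inr rfl, hab, ?_, ?_, ?_, ?_, ?_, ?_, ?_, ?_, ?_⟩ <;>
            simp_all <;> tauto
        · -- (xi, yi)
          refine ⟨ai, bi, Walk.cons ha.symm Walk.nil, Walk.cons hb.symm Walk.nil,
            Or.inl rfl, Or.inr rfl, hab, ?_, ?_, ?_, ?_, ?_, ?_, ?_, ?_, ?_⟩ <;>
            simp_all <;> tauto
        · -- (v, xi)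
          refine ⟨bi, ai, Walk.cons h' (Walk.cons hb.symm Walk.nil), Walk.cons ha.symm Walk.nil,
            Or.inr rfl, Or.inl rfl, hab.symm, ?_, ?_, ?_, ?_, ?_, ?_, ?_, ?_, ?_⟩ <;>
            simp_all <;> tauto
        · exact absurd rfl hne
        · -- (v, yi)
          refine ⟨ai, bi, Walk.cons h.symm (Walk.cons ha.symm Walk.nil),
            Walk.cons hb.symm Walk.nil,
            Or.inl rfl, Or.inr rfl, hab, ?_, ?_, ?_, ?_, ?_, ?_, ?_, ?_, ?_⟩ <;>
            simp_all <;> tauto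
        · -- (yi, xi)
          refine ⟨bi, ai, Walk.cons hb.symm Walk.nil, Walk.cons ha.symm Walk.nil,
            Or.inr rfl, Or.inl rfl, hab.symm, ?_, ?_, ?_, ?_, ?_, ?_, ?_, ?_, ?_⟩ <;>
            simp_all <;> tauto
        · -- (yi, v)
          refine ⟨bi, ai, Walk.cons hb.symm Walk.nil,
            Walk.cons h.symm (Walk.cons ha.symm Walk.nil),
            Or.inr rfl, Or.inl rfl, hab.symm, ?_, ?_, ?_, ?_, ?_, ?_, ?_, ?_, ?_⟩ <;>
            simp_all <;> tauto
        · exact absurd rfl hne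
      | cons h'' q'' =>
        simp only [Walk.length_cons] at hlen
        omega

end Stmt14AuxB

open Finset SimpleGraph Walk Stmt14Aux Stmt14AuxB

theorem stmt14 {α : Type*} [Fintype α] [DecidableEq α] (H : SimpleGraph α) [DecidableRel H.Adj]
    (U V : Finset α) (hUV : Disjoint U V) (hunion : U ∪ V = Finset.univ)
    (hdeg : ∀ v ∈ V, (0.9 : ℝ) * V.card ≤ ((V.filter (H.Adj v)).card : ℝ))
    (hU : (U.card : ℝ) ≤ (0.1 : ℝ) * V.card)
    (m : ℕ) (x y : Fin m → α) (p : ∀ i, H.Walk (x i) (y i))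
    (hpath : ∀ i, (p i).IsPath) (hlen : ∀ i, (p i).length ≤ 2)
    (hsupU : ∀ w : α, w ∈ U ↔ ∃ i, w ∈ (p i).support)
    (hdisj : ∀ i j, i ≠ j → ∀ w, w ∈ (p i).support → w ∉ (p j).support)
    (a b : Fin m → α)
    (haV : ∀ i, a i ∈ V) (hbV : ∀ i, b i ∈ V)
    (hainj : Function.Injective a) (hbinj : Function.Injective b)
    (hab : ∀ i j, a i ≠ b j)
    (hadja : ∀ i, H.Adj (a i) (x i)) (hadjb : ∀ i, H.Adj (b i) (y i)) :
    ∀ x₀ y₀ : α, x₀ ≠ y₀ → ∀ ℓ : ℕ, 6 ≤ ℓ → (ℓ : ℝ) ≤ 2 * (Fintype.card α : ℝ) / 3 →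
      ∃ q : H.Walk x₀ y₀, q.IsPath ∧ q.length = ℓ := by
  intro x₀ y₀ hne ℓ hl6 hlub
  -- basic numeric facts
  have hcard : Fintype.card α = U.card + V.card := by
    rw [← Finset.card_univ, ← hunion, Finset.card_union_of_disjoint hUV]
  have hUc : 10 * U.card ≤ V.card := by
    have h2 : (10 * U.card : ℝ) ≤ (V.card : ℝ) := by push_cast; linarith [hU]
    exact_mod_cast h2
  have h3l : 3 * ℓ ≤ 2 * (U.card + V.card) := by
    have h2 : (3 * ℓ : ℝ) ≤ 2 * (U.card + V.card) := by
      rw [hcard] at hlub; push_cast at hlub ⊢; linarith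
    exact_mod_cast h2
  have hD : ∀ v ∈ V, (9 * V.card + 9) / 10 ≤ (V.filter (H.Adj v)).card := by
    intro v hv
    have h2 : (9 * V.card : ℝ) ≤ 10 * (V.filter (H.Adj v)).card := by linarith [hdeg v hv]
    have h3 : 9 * V.card ≤ 10 * (V.filter (H.Adj v)).card := by exact_mod_cast h2
    omega
  have hV0 : 0 < V.card := by omega
  obtain ⟨v₀, hv₀⟩ := Finset.card_pos.mp hV0
  have hp10 : 10 ≤ V.card := by
    have h1 := hD v₀ hv₀
    have h2 : (V.filter (H.Adj v₀)).card ≤ V.card - 1 := by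
      have hsub : V.filter (H.Adj v₀) ⊆ V.erase v₀ := by
        intro z hz
        rw [Finset.mem_filter] at hz
        exact Finset.mem_erase.2 ⟨fun hzz => by rw [hzz] at hz; exact H.irrefl hz.2, hz.1⟩
      calc (V.filter (H.Adj v₀)).card ≤ (V.erase v₀).card := Finset.card_le_card hsub
        _ = V.card - 1 := Finset.card_erase_of_mem hv₀
    omega
  have key : ℓ + V.card + 1 ≤ 2 * ((9 * V.card + 9) / 10) := by omega
  -- membership facts
  have hsuppU : ∀ i, ∀ z ∈ (p i).support, z ∈ U := fun i z hz => (hsupU z).2 ⟨i, hz⟩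
  have hUnotV : ∀ z ∈ U, z ∉ V := fun z hz hzv => Finset.disjoint_left.mp hUV hz hzv
  have hmem : ∀ z : α, z ∈ U ∨ z ∈ V := fun z => by
    have : z ∈ U ∪ V := by rw [hunion]; exact Finset.mem_univ z
    exact Finset.mem_union.mp this
  have haP : ∀ i, a i ∉ (p i).support := fun i h => hUnotV _ (hsuppU i _ h) (haV i)
  have hbP : ∀ i, b i ∉ (p i).support := fun i h => hUnotV _ (hsuppU i _ h) (hbV i)
  -- middle path constructor
  have midl : ∀ (k : ℕ) (u v : α), u ∈ V → v ∈ V → u ≠ v → 2 ≤ k → k ≤ ℓ →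
      ∃ q : H.Walk u v, q.IsPath ∧ q.length = k ∧ ∀ w ∈ q.support, w ∈ V := by
    intro k u v hu hv huv h2 hkl
    obtain ⟨q, hq1, hq2, hq3⟩ := Stmt14Aux.mid_path H V ((9 * V.card + 9) / 10) hD k ∅ u v hu hv
      huv (Finset.notMem_empty u) (Finset.notMem_empty v) h2
      (by rw [Finset.card_empty]; omega)
    exact ⟨q, hq1, hq2, fun w hw => (hq3 w hw).1⟩
  -- tails
  have tailshort : ∀ (i : Fin m) (z : α) (hz : z ∈ (p i).support),
      ∃ (c : α) (q : H.Walk z c), (c = a i ∨ c = b i) ∧ q.IsPath ∧ 1 ≤ q.length ∧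
        q.length ≤ 2 ∧ ∀ t ∈ q.support, t = c ∨ t ∈ (p i).support := by
    intro i z hz
    have hsum : ((p i).takeUntil z hz).length + ((p i).dropUntil z hz).length = (p i).length := by
      have := congrArg Walk.length ((p i).take_spec hz)
      rwa [Walk.length_append] at this
    by_cases hta : ((p i).takeUntil z hz).length ≤ 1
    · obtain ⟨q, h1, h2, h3⟩ := tail_walk_a (p i) (hpath i) z hz (hadja i) (haP i)
      exact ⟨a i, q, Or.inl rfl, h1, by omega, by omega, h3⟩
    · obtain ⟨q, h1, h2, h3⟩ := tail_walk_b (p i) (hpath i) z hz (hadjb i) (hbP i)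
      have := hlen i
      exact ⟨b i, q, Or.inr rfl, h1, by omega, by omega, h3⟩
  have tailavoid : ∀ (i : Fin m) (z : α) (hz : z ∈ (p i).support) (f : α),
      ∃ (c : α) (q : H.Walk z c), (c = a i ∨ c = b i) ∧ c ≠ f ∧ q.IsPath ∧ 1 ≤ q.length ∧
        q.length ≤ 3 ∧ ∀ t ∈ q.support, t = c ∨ t ∈ (p i).support := by
    intro i z hz f
    have hta := Walk.length_takeUntil_le (p i) hz
    have htd := Walk.length_dropUntil_le (p i) hz
    have hli := hlen i
    by_cases haf : a i = f
    · obtain ⟨q, h1, h2, h3⟩ := tail_walk_b (p i) (hpath i) z hz (hadjb i) (hbP i)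
      exact ⟨b i, q, Or.inr rfl, fun hbf => hab i i (haf.trans hbf.symm), h1,
        by omega, by omega, h3⟩
    · obtain ⟨q, h1, h2, h3⟩ := tail_walk_a (p i) (hpath i) z hz (hadja i) (haP i)
      exact ⟨a i, q, Or.inl rfl, haf, h1, by omega, by omega, h3⟩
  have habV : ∀ (i : Fin m) (c : α), (c = a i ∨ c = b i) → c ∈ V := by
    rintro i c (rfl | rfl)
    · exact haV i
    · exact hbV i
  -- main case analysis
  rcases hmem x₀ with hx0 | hx0 <;> rcases hmem y₀ with hy0 | hy0
  · -- both in U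
    obtain ⟨i, hi⟩ := (hsupU x₀).1 hx0
    obtain ⟨j, hj⟩ := (hsupU y₀).1 hy0
    by_cases hij : i = j
    · subst hij
      obtain ⟨cx, cy, qx, qy, hcx, hcy, hcxy, hqx, hqy, hqx1, hqx2, hqy1, hqy2, hsx, hsy, hdxy⟩ :=
        two_tails (a i) (b i) x₀ y₀ (p i) (hpath i) (hlen i) hi hj hne
          (hadja i) (hadjb i) (haP i) (hbP i) (hab i i)
      obtain ⟨mid, hm1, hm2, hm3⟩ := midl (ℓ - qx.length - qy.length) cx cy
        (habV i cx hcx) (habV i cy hcy) hcxy (by omega) (by omega)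
      obtain ⟨q, hq1, hq2⟩ := glue3 qx qy mid hqx hqy hm1 hdxy
        (fun z hz hzm => (hsx z hz).resolve_right
          (fun hzU => hUnotV z (hsuppU i z hzU) (hm3 z hzm)))
        (fun z hz hzm => (hsy z hz).resolve_right
          (fun hzU => hUnotV z (hsuppU i z hzU) (hm3 z hzm)))
      exact ⟨q, hq1, by omega⟩
    · obtain ⟨cx, qx, hcx, hqx, hqx1, hqx2, hsx⟩ := tailshort i x₀ hi
      obtain ⟨cy, qy, hcy, hqy, hqy1, hqy2, hsy⟩ := tailshort j y₀ hj
      have hcxy : cx ≠ cy := by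
        rcases hcx with rfl | rfl <;> rcases hcy with rfl | rfl
        · exact fun h => hij (hainj h)
        · exact hab i j
        · exact fun h => hab j i h.symm
        · exact fun h => hij (hbinj h)
      have hdxy : ∀ z ∈ qx.support, z ∉ qy.support := by
        intro z hz1 hz2
        rcases hsx z hz1 with rfl | hz1'
        · rcases hsy z hz2 with h | hz2'
          · exact hcxy h
          · exact hUnotV z (hsuppU j z hz2') (habV i z hcx)
        · rcases hsy z hz2 with rfl | hz2'
          · exact hUnotV z (hsuppU i z hz1') (habV j z hcy)
          · exact hdisj i j hij z hz1' hz2'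
      obtain ⟨mid, hm1, hm2, hm3⟩ := midl (ℓ - qx.length - qy.length) cx cy
        (habV i cx hcx) (habV j cy hcy) hcxy (by omega) (by omega)
      obtain ⟨q, hq1, hq2⟩ := glue3 qx qy mid hqx hqy hm1 hdxy
        (fun z hz hzm => (hsx z hz).resolve_right
          (fun hzU => hUnotV z (hsuppU i z hzU) (hm3 z hzm)))
        (fun z hz hzm => (hsy z hz).resolve_right
          (fun hzU => hUnotV z (hsuppU j z hzU) (hm3 z hzm)))
      exact ⟨q, hq1, by omega⟩
  · -- x₀ ∈ U, y₀ ∈ V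
    obtain ⟨i, hi⟩ := (hsupU x₀).1 hx0
    obtain ⟨c, qx, hc, hcy0, hqx, hqx1, hqx2, hsx⟩ := tailavoid i x₀ hi y₀
    obtain ⟨mid, hm1, hm2, hm3⟩ := midl (ℓ - qx.length) c y₀ (habV i c hc) hy0 hcy0
      (by omega) (by omega)
    obtain ⟨q, hq1, hq2⟩ := glue3 qx (Walk.nil : H.Walk y₀ y₀) mid hqx Walk.IsPath.nil hm1
      (by
        intro z hz1 hz2
        simp only [Walk.support_nil, List.mem_singleton] at hz2
        subst hz2
        rcases hsx z hz1 with h | h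
        · exact hcy0 h.symm
        · exact hUnotV z (hsuppU i z h) hy0)
      (fun z hz hzm => (hsx z hz).resolve_right
        (fun hzU => hUnotV z (hsuppU i z hzU) (hm3 z hzm)))
      (by
        intro z hz1 _
        simp only [Walk.support_nil, List.mem_singleton] at hz1
        exact hz1)
    exact ⟨q, hq1, by simp at hq2; omega⟩
  · -- x₀ ∈ V, y₀ ∈ U
    obtain ⟨j, hj⟩ := (hsupU y₀).1 hy0
    obtain ⟨c, qy, hc, hcx0, hqy, hqy1, hqy2, hsy⟩ := tailavoid j y₀ hj x₀
    obtain ⟨mid, hm1, hm2, hm3⟩ := midl (ℓ - qy.length) x₀ c hx0 (habV j c hc)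
      (fun h => hcx0 h.symm) (by omega) (by omega)
    obtain ⟨q, hq1, hq2⟩ := glue3 (Walk.nil : H.Walk x₀ x₀) qy mid Walk.IsPath.nil hqy hm1
      (by
        intro z hz1 hz2
        simp only [Walk.support_nil, List.mem_singleton] at hz1
        subst hz1
        rcases hsy z hz2 with h | h
        · exact hcx0 h.symm
        · exact hUnotV z (hsuppU j z h) hx0)
      (by
        intro z hz1 _
        simp only [Walk.support_nil, List.mem_singleton] at hz1
        exact hz1)
      (fun z hz hzm => (hsy z hz).resolve_right
        (fun hzU => hUnotV z (hsuppU j z hzU) (hm3 z hzm)))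
    exact ⟨q, hq1, by simp at hq2; omega⟩
  · -- both in V
    obtain ⟨q, hq1, hq2, _⟩ := midl ℓ x₀ y₀ hx0 hy0 hne (by omega) le_rfl
    exact ⟨q, hq1, hq2⟩
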